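/- A CM-order A admits exactly one automorphism σ with the property that ψ(σ(x)) equals the complex conjugate of ψ(x) for all x ∈ A and all ring homomorphisms ψ : A → ℂ, and this automorphism is an involution: σ(σ(x)) = x for all x. -/

import Mathlib

lemma sep (A : Type*) [CommRing A] [IsReduced A]
    [Module.Free ℤ A] [Module.Finite ℤ A] (x : A)
    (h : ∀ ψ : A →+* ℂ, ψ x = 0) : x = 0 := by
  by_contra hx
  -- submonoid of elements n • x^k, n nonzero integer
  set S : Submonoid A :=
    { carrier := {a | ∃ n : ℤ, ∃ k : ℕ, n ≠ 0 ∧ a = n • x ^ k}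
      one_mem' := ⟨1, 0, one_ne_zero, by simp⟩
      mul_mem' := by
        rintro a b ⟨n, k, hn, rfl⟩ ⟨m, l, hm, rfl⟩
        exact ⟨n * m, k + l, mul_ne_zero hn hm, by
          rw [pow_add]; rw [smul_mul_smul_comm]⟩ } with hS
  have h0 : (0 : A) ∉ (S : Set A) := by
    rintro ⟨n, k, hn, hnk⟩
    have hxk : x ^ k ≠ 0 := fun hk => hx (IsReduced.eq_zero x ⟨k, hk⟩)
    exact (smul_ne_zero hn hxk) hnk.symm
  obtain ⟨p, hp, -, hdisj⟩ := Ideal.exists_le_prime_disjoint (⊥ : Ideal A) S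
    (by simp [Set.disjoint_left, h0])
  have hxp : x ∉ p := fun hxp =>
    Set.disjoint_left.mp hdisj hxp ⟨1, 1, one_ne_zero, by simp⟩
  have hint : ∀ n : ℤ, n ≠ 0 → (n : A) ∉ p := fun n hn hnp =>
    Set.disjoint_left.mp hdisj hnp ⟨n, 0, hn, by simp [zsmul_eq_mul]⟩
  letI := hp
  let D := A ⧸ p
  haveI : CharZero D := by
    refine charZero_of_inj_zero fun n hn => ?_
    by_contra hn0
    refine hint n (by exact_mod_cast hn0) ?_
    have : ((n : ℤ) : D) = 0 := by push_cast [hn]; simp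
    rwa [← map_intCast (Ideal.Quotient.mk p), Ideal.Quotient.eq_zero_iff_mem] at this
  haveI : NoZeroSMulDivisors ℤ D := inferInstance
  haveI : Algebra.IsIntegral ℤ D := Algebra.IsIntegral.of_finite ℤ D
  haveI : Algebra.IsAlgebraic ℤ D := Algebra.IsIntegral.isAlgebraic
  let K := FractionRing D
  haveI : CharZero K := charZero_of_injective_algebraMap
    (IsFractionRing.injective D K)
  haveI : NoZeroSMulDivisors ℤ K := inferInstance
  haveI : Algebra.IsAlgebraic ℤ K := (IsFractionRing.isAlgebraic_iff' ℤ D K).1 inferInstance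
  let f : K →ₐ[ℤ] ℂ := IsAlgClosed.lift
  have := h ((f : K →+* ℂ).comp ((algebraMap D K).comp (Ideal.Quotient.mk p)))
  simp only [RingHom.comp_apply, RingHom.coe_coe] at this
  have hD : Ideal.Quotient.mk p x ≠ 0 := by
    rwa [Ne, Ideal.Quotient.eq_zero_iff_mem]
  exact hD (by simpa using this)

/-- A CM-order admits exactly one automorphism `σ` with `ψ(σ x) = conj (ψ x)` for
all ring homomorphisms `ψ : A → ℂ`, and any such automorphism is an involution. -/
theorem stmt4 (A : Type*) [CommRing A] [IsReduced A]
    [Module.Free ℤ A] [Module.Finite ℤ A]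
    (σ τ : A ≃+* A)
    (hσ : ∀ (ψ : A →+* ℂ) (x : A), ψ (σ x) = starRingEnd ℂ (ψ x))
    (hτ : ∀ (ψ : A →+* ℂ) (x : A), ψ (τ x) = starRingEnd ℂ (ψ x)) :
    σ = τ ∧ ∀ x : A, σ (σ x) = x := by
  constructor
  · ext x
    have : σ x - τ x = 0 := sep A _ fun ψ => by
      rw [map_sub, hσ ψ x, hτ ψ x, sub_self]
    linear_combination (norm := module) this
  · intro x
    have : σ (σ x) - x = 0 := sep A _ fun ψ => by
      rw [map_sub, hσ ψ (σ x), hσ ψ x, Complex.conj_conj, sub_self]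
    linear_combination (norm := module) this
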